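/- Assume v_max − ν·W(s_n) > 0 and that there exists an index i ∈ {0, ..., n−1} with W(s_i) ≥ w_{e_{i+1}}; let o be the least such index, and let k be the greatest index j ≤ o with W(s_j) ≤ C. Then the set {s_0, s_1, ..., s_k} is the Pareto front with respect to simultaneously minimizing W and maximizing B over feasible solutions: (a) for every solution s with W(s) ≤ C there exists i ≤ k with W(s_i) ≤ W(s) and B(s_i) ≥ B(s), and (b) for all 0 ≤ i < j ≤ k, W(s_i) < W(s_j) and B(s_i) < B(s_j), so no two of s_0, ..., s_k dominate each other. -/

import Mathlib

/-- Total weight of a solution (subset of items). -/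
noncomputable def pwtW (w : ℕ → ℝ) (s : Finset ℕ) : ℝ := ∑ i ∈ s, w i

/-- Total profit of a solution. -/
noncomputable def pwtP (p : ℕ → ℝ) (s : Finset ℕ) : ℝ := ∑ i ∈ s, p i

/-- Benefit of a solution: profit minus travel cost. -/
noncomputable def pwtB (w p : ℕ → ℝ) (R d vmax ν : ℝ) (s : Finset ℕ) : ℝ :=
  pwtP p s - R * d / (vmax - ν * pwtW w s)

/-- Threshold weight `w_{e_i}` of item `i`. -/
noncomputable def pwtThr (w p : ℕ → ℝ) (R d vmax ν : ℝ) (i : ℕ) : ℝ :=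
  vmax / ν - w i / 2 * (1 + Real.sqrt (1 + 4 * R * d / (ν * w i * p i)))


lemma pwt_quad_id (pt R d ν wt A : ℝ) (hpt : 0 < pt) (hR : 0 < R) (hd : 0 < d)
    (hν : 0 < ν) (hwt : 0 < wt) :
    pt * A * (A - ν * wt) - R * d * (ν * wt)
      = pt * (A - ν * wt / 2 * (1 + Real.sqrt (1 + 4 * R * d / (ν * wt * pt))))
           * (A - ν * wt / 2 * (1 - Real.sqrt (1 + 4 * R * d / (ν * wt * pt)))) := by
  set X := 1 + 4 * R * d / (ν * wt * pt) with hX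
  have hpos : (0:ℝ) ≤ X := by rw [hX]; positivity
  have hS2 : (Real.sqrt X)^2 = X := Real.sq_sqrt hpos
  have h4 : 4 * R * d = (X - 1) * (ν * wt * pt) := by
    rw [hX]; field_simp; ring
  linear_combination (pt * (ν * wt / 2)^2) * hS2 - (ν * wt / 4) * h4

lemma pwt_sqrt_ge_one (x : ℝ) (hx : 0 ≤ x) : 1 ≤ Real.sqrt (1 + x) := by
  have := Real.sqrt_le_sqrt (show (1:ℝ) ≤ 1 + x by linarith)
  rwa [Real.sqrt_one] at this

lemma pwt_step_le (pt R d ν wt A : ℝ) (hpt : 0 < pt) (hR : 0 < R) (hd : 0 < d)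
    (hν : 0 < ν) (hwt : 0 < wt) (hA' : 0 < A - ν * wt)
    (h : A ≤ ν * wt / 2 * (1 + Real.sqrt (1 + 4 * R * d / (ν * wt * pt)))) :
    pt ≤ R * d / (A - ν * wt) - R * d / A := by
  have hνw : 0 < ν * wt := mul_pos hν hwt
  have hA : 0 < A := by linarith
  set S := Real.sqrt (1 + 4 * R * d / (ν * wt * pt)) with hSdef
  have hS1 : 1 ≤ S := pwt_sqrt_ge_one _ (by positivity)
  have hid := pwt_quad_id pt R d ν wt A hpt hR hd hν hwt
  rw [← hSdef] at hid
  have hr' : 0 < A - ν * wt / 2 * (1 - S) := by nlinarith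
  have e1 : 0 ≤ pt * ((ν * wt / 2 * (1 + S) - A) * (A - ν * wt / 2 * (1 - S))) :=
    mul_nonneg hpt.le (mul_nonneg (by linarith) hr'.le)
  have hkey : pt * A * (A - ν * wt) ≤ R * d * (ν * wt) := by nlinarith [hid, e1]
  have heq : R * d / (A - ν * wt) - R * d / A = R * d * (ν * wt) / (A * (A - ν * wt)) := by
    field_simp; ring
  rw [heq, le_div_iff₀ (by positivity)]
  nlinarith [hkey]

lemma pwt_step_lt (pt R d ν wt A : ℝ) (hpt : 0 < pt) (hR : 0 < R) (hd : 0 < d)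
    (hν : 0 < ν) (hwt : 0 < wt) (hA' : 0 < A - ν * wt)
    (h : ν * wt / 2 * (1 + Real.sqrt (1 + 4 * R * d / (ν * wt * pt))) < A) :
    R * d / (A - ν * wt) - R * d / A < pt := by
  have hνw : 0 < ν * wt := mul_pos hν hwt
  have hA : 0 < A := by linarith
  set S := Real.sqrt (1 + 4 * R * d / (ν * wt * pt)) with hSdef
  have hS1 : 1 ≤ S := pwt_sqrt_ge_one _ (by positivity)
  have hid := pwt_quad_id pt R d ν wt A hpt hR hd hν hwt
  rw [← hSdef] at hid
  have hr' : 0 < A - ν * wt / 2 * (1 - S) := by nlinarith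
  have e1 : 0 < pt * ((A - ν * wt / 2 * (1 + S)) * (A - ν * wt / 2 * (1 - S))) :=
    mul_pos hpt (mul_pos (by linarith) hr')
  have hkey : R * d * (ν * wt) < pt * A * (A - ν * wt) := by nlinarith [hid, e1]
  have heq : R * d / (A - ν * wt) - R * d / A = R * d * (ν * wt) / (A * (A - ν * wt)) := by
    field_simp; ring
  rw [heq, div_lt_iff₀ (by positivity)]
  nlinarith [hkey]

lemma pwt_r_mono (R d ν w1 p1 w2 p2 : ℝ) (hR : 0 < R) (hd : 0 < d) (hν : 0 < ν)
    (hw1 : 0 < w1) (hp1 : 0 < p1) (hp2 : 0 < p2) (hw : w1 ≤ w2) (hp : p2 ≤ p1) :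
    ν * w1 / 2 * (1 + Real.sqrt (1 + 4 * R * d / (ν * w1 * p1)))
      ≤ ν * w2 / 2 * (1 + Real.sqrt (1 + 4 * R * d / (ν * w2 * p2))) := by
  have hw2 : 0 < w2 := lt_of_lt_of_le hw1 hw
  have form : ∀ wt pt : ℝ, 0 < wt → 0 < pt →
      ν * wt / 2 * (1 + Real.sqrt (1 + 4 * R * d / (ν * wt * pt)))
        = ν * wt / 2 + Real.sqrt ((ν * wt / 2)^2 + ν * wt * R * d / pt) := by
    intro wt pt hwt hpt
    have h1 : (ν * wt / 2)^2 * (1 + 4 * R * d / (ν * wt * pt))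
        = (ν * wt / 2)^2 + ν * wt * R * d / pt := by field_simp; ring
    have h2 : Real.sqrt ((ν * wt / 2)^2 + ν * wt * R * d / pt)
        = (ν * wt / 2) * Real.sqrt (1 + 4 * R * d / (ν * wt * pt)) := by
      rw [← h1, Real.sqrt_mul (by positivity), Real.sqrt_sq (by positivity)]
    rw [h2]; ring
  rw [form w1 p1 hw1 hp1, form w2 p2 hw2 hp2]
  have hww : ν * w1 / 2 ≤ ν * w2 / 2 := by
    have := mul_le_mul_of_nonneg_left hw hν.le; linarith
  have hrad : (ν * w1 / 2)^2 + ν * w1 * R * d / p1 ≤ (ν * w2 / 2)^2 + ν * w2 * R * d / p2 := by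
    have h1 : (ν * w1 / 2)^2 ≤ (ν * w2 / 2)^2 := pow_le_pow_left₀ (by positivity) hww 2
    have h3 : w1 * p2 ≤ w2 * p1 := mul_le_mul hw hp hp2.le hw2.le
    have h2 : ν * w1 * R * d / p1 ≤ ν * w2 * R * d / p2 := by
      rw [div_le_div_iff₀ hp1 hp2]
      nlinarith [mul_le_mul_of_nonneg_left h3 (by positivity : (0:ℝ) ≤ ν * R * d)]
    linarith
  have := Real.sqrt_le_sqrt hrad
  linarith

theorem pwt_prefixes_are_pareto_front
    (n : ℕ) (w p : ℕ → ℝ) (R d vmin vmax C ν : ℝ)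
    (hw : ∀ j ∈ Finset.Icc 1 n, 0 < w j) (hp : ∀ j ∈ Finset.Icc 1 n, 0 < p j)
    (hR : 0 < R) (hd : 0 < d) (hvmin : 0 < vmin) (hv : vmin < vmax)
    (hC : 0 < C) (hν : ν = (vmax - vmin) / C)
    (hpm : ∀ i j, 1 ≤ i → i < j → j ≤ n → p j < p i)
    (hwm : ∀ i j, 1 ≤ i → i < j → j ≤ n → w i < w j)
    (hposn : 0 < vmax - ν * pwtW w (Finset.Icc 1 n))
    (o : ℕ) (ho : o < n)
    (hWo : pwtThr w p R d vmax ν (o + 1) ≤ pwtW w (Finset.Icc 1 o))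
    (hleast : ∀ i < o, pwtW w (Finset.Icc 1 i) < pwtThr w p R d vmax ν (i + 1))
    (k : ℕ) (hko : k ≤ o) (hkC : pwtW w (Finset.Icc 1 k) ≤ C)
    (hkmax : ∀ j, k < j → j ≤ o → C < pwtW w (Finset.Icc 1 j)) :
    (∀ s : Finset ℕ, s ⊆ Finset.Icc 1 n → pwtW w s ≤ C →
      ∃ i ≤ k, pwtW w (Finset.Icc 1 i) ≤ pwtW w s ∧
        pwtB w p R d vmax ν s ≤ pwtB w p R d vmax ν (Finset.Icc 1 i)) ∧
    (∀ i j, i < j → j ≤ k →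
      pwtW w (Finset.Icc 1 i) < pwtW w (Finset.Icc 1 j) ∧
      pwtB w p R d vmax ν (Finset.Icc 1 i) < pwtB w p R d vmax ν (Finset.Icc 1 j)) := by
  have hν0 : 0 < ν := by rw [hν]; exact div_pos (by linarith) hC
  have hνC : ν * C = vmax - vmin := by rw [hν]; field_simp
  have hw' : ∀ j, 1 ≤ j → j ≤ n → 0 < w j := fun j h1 h2 => hw j (Finset.mem_Icc.mpr ⟨h1, h2⟩)
  have hp' : ∀ j, 1 ≤ j → j ≤ n → 0 < p j := fun j h1 h2 => hp j (Finset.mem_Icc.mpr ⟨h1, h2⟩)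
  have Wsucc : ∀ j : ℕ, pwtW w (Finset.Icc 1 (j + 1)) = pwtW w (Finset.Icc 1 j) + w (j + 1) :=
    fun j => Finset.sum_Icc_succ_top (Nat.succ_le_succ (Nat.zero_le j)) w
  have Psucc : ∀ j : ℕ, pwtP p (Finset.Icc 1 (j + 1)) = pwtP p (Finset.Icc 1 j) + p (j + 1) :=
    fun j => Finset.sum_Icc_succ_top (Nat.succ_le_succ (Nat.zero_le j)) p
  have Wmono_lt : ∀ j, j ≤ n → ∀ i, i < j →
      pwtW w (Finset.Icc 1 i) < pwtW w (Finset.Icc 1 j) := by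
    intro j
    induction j with
    | zero => intro _ i hi; omega
    | succ t ih =>
      intro hj i hi
      have hwpos : 0 < w (t + 1) := hw' (t + 1) (by omega) hj
      have hstep : pwtW w (Finset.Icc 1 t) < pwtW w (Finset.Icc 1 (t + 1)) := by
        rw [Wsucc t]; linarith
      rcases Nat.lt_succ_iff_lt_or_eq.mp hi with h | h
      · exact lt_trans (ih (by omega) i h) hstep
      · rw [h]; exact hstep
  have Wmono_le : ∀ i j, i ≤ j → j ≤ n →
      pwtW w (Finset.Icc 1 i) ≤ pwtW w (Finset.Icc 1 j) := by
    intro i j hij hjn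
    rcases eq_or_lt_of_le hij with h | h
    · rw [h]
    · exact (Wmono_lt j hjn i h).le
  have hApos : ∀ m, m ≤ n → 0 < vmax - ν * pwtW w (Finset.Icc 1 m) := by
    intro m hm
    rcases eq_or_lt_of_le hm with h | h
    · rw [h]; exact hposn
    · have h1 := Wmono_lt n le_rfl m h
      have h2 := mul_lt_mul_of_pos_left h1 hν0
      linarith
  -- strict benefit increase below o
  have Bstep_lt : ∀ j, j < o →
      pwtB w p R d vmax ν (Finset.Icc 1 j) < pwtB w p R d vmax ν (Finset.Icc 1 (j + 1)) := by
    intro j hj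
    have hj1n : j + 1 ≤ n := by omega
    have hwp : 0 < w (j + 1) := hw' _ (by omega) hj1n
    have hpp : 0 < p (j + 1) := hp' _ (by omega) hj1n
    have hA' : 0 < (vmax - ν * pwtW w (Finset.Icc 1 j)) - ν * w (j + 1) := by
      have h1 := hApos (j + 1) hj1n
      rw [Wsucc j] at h1
      have e : ν * (pwtW w (Finset.Icc 1 j) + w (j + 1))
          = ν * pwtW w (Finset.Icc 1 j) + ν * w (j + 1) := by ring
      linarith
    have hrA : ν * w (j + 1) / 2 *
        (1 + Real.sqrt (1 + 4 * R * d / (ν * w (j + 1) * p (j + 1))))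
          < vmax - ν * pwtW w (Finset.Icc 1 j) := by
      have h1 := mul_lt_mul_of_pos_left (hleast j hj) hν0
      unfold pwtThr at h1
      have h2 : ν * (vmax / ν - w (j + 1) / 2 *
          (1 + Real.sqrt (1 + 4 * R * d / (ν * w (j + 1) * p (j + 1)))))
            = vmax - ν * w (j + 1) / 2 *
              (1 + Real.sqrt (1 + 4 * R * d / (ν * w (j + 1) * p (j + 1)))) := by
        field_simp
      linarith
    have hstep := pwt_step_lt (p (j + 1)) R d ν (w (j + 1))
      (vmax - ν * pwtW w (Finset.Icc 1 j)) hpp hR hd hν0 hwp hA' hrA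
    unfold pwtB
    rw [Wsucc j, Psucc j]
    have e : vmax - ν * (pwtW w (Finset.Icc 1 j) + w (j + 1))
        = (vmax - ν * pwtW w (Finset.Icc 1 j)) - ν * w (j + 1) := by ring
    rw [e]
    linarith
  have Bmono : ∀ j, j ≤ k → ∀ i, i < j →
      pwtB w p R d vmax ν (Finset.Icc 1 i) < pwtB w p R d vmax ν (Finset.Icc 1 j) := by
    intro j
    induction j with
    | zero => intro _ i hi; omega
    | succ t ih =>
      intro hj i hi
      have hstep := Bstep_lt t (by omega)
      rcases Nat.lt_succ_iff_lt_or_eq.mp hi with h | h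
      · exact lt_trans (ih (by omega) i h) hstep
      · rw [h]; exact hstep
  -- benefit decrease from o onwards
  have Bstep_ge : ∀ j, o ≤ j → j < n →
      pwtB w p R d vmax ν (Finset.Icc 1 (j + 1)) ≤ pwtB w p R d vmax ν (Finset.Icc 1 j) := by
    intro j hoj hjn
    have hj1n : j + 1 ≤ n := by omega
    have hwp : 0 < w (j + 1) := hw' _ (by omega) hj1n
    have hpp : 0 < p (j + 1) := hp' _ (by omega) hj1n
    have hA' : 0 < (vmax - ν * pwtW w (Finset.Icc 1 j)) - ν * w (j + 1) := by
      have h1 := hApos (j + 1) hj1n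
      rw [Wsucc j] at h1
      have e : ν * (pwtW w (Finset.Icc 1 j) + w (j + 1))
          = ν * pwtW w (Finset.Icc 1 j) + ν * w (j + 1) := by ring
      linarith
    have hrmono : ν * w (o + 1) / 2 *
        (1 + Real.sqrt (1 + 4 * R * d / (ν * w (o + 1) * p (o + 1))))
          ≤ ν * w (j + 1) / 2 *
        (1 + Real.sqrt (1 + 4 * R * d / (ν * w (j + 1) * p (j + 1)))) := by
      rcases eq_or_lt_of_le hoj with h | h
      · rw [h]
      · exact pwt_r_mono R d ν (w (o + 1)) (p (o + 1)) (w (j + 1)) (p (j + 1)) hR hd hν0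
          (hw' (o + 1) (by omega) (by omega)) (hp' (o + 1) (by omega) (by omega))
          (hp' (j + 1) (by omega) hj1n)
          (hwm (o + 1) (j + 1) (by omega) (by omega) hj1n).le
          (hpm (o + 1) (j + 1) (by omega) (by omega) hj1n).le
    have hAr : vmax - ν * pwtW w (Finset.Icc 1 j) ≤ ν * w (j + 1) / 2 *
        (1 + Real.sqrt (1 + 4 * R * d / (ν * w (j + 1) * p (j + 1)))) := by
      have h2 := mul_le_mul_of_nonneg_left hWo hν0.le
      unfold pwtThr at h2
      have h3 : ν * (vmax / ν - w (o + 1) / 2 *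
          (1 + Real.sqrt (1 + 4 * R * d / (ν * w (o + 1) * p (o + 1)))))
            = vmax - ν * w (o + 1) / 2 *
              (1 + Real.sqrt (1 + 4 * R * d / (ν * w (o + 1) * p (o + 1)))) := by
        field_simp
      have h1 := mul_le_mul_of_nonneg_left (Wmono_le o j hoj (by omega)) hν0.le
      linarith
    have hstep := pwt_step_le (p (j + 1)) R d ν (w (j + 1))
      (vmax - ν * pwtW w (Finset.Icc 1 j)) hpp hR hd hν0 hwp hA' hAr
    unfold pwtB
    rw [Wsucc j, Psucc j]
    have e : vmax - ν * (pwtW w (Finset.Icc 1 j) + w (j + 1))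
        = (vmax - ν * pwtW w (Finset.Icc 1 j)) - ν * w (j + 1) := by ring
    rw [e]
    linarith
  have Bdesc : ∀ m, o ≤ m → m ≤ n →
      pwtB w p R d vmax ν (Finset.Icc 1 m) ≤ pwtB w p R d vmax ν (Finset.Icc 1 o) := by
    intro m
    induction m with
    | zero => intro h1 _; rw [Nat.le_zero.mp h1]
    | succ t ih =>
      intro h1 h2
      rcases eq_or_lt_of_le h1 with h | h
      · rw [← h]
      · have hot : o ≤ t := by omega
        exact le_trans (Bstep_ge t hot (by omega)) (ih hot (by omega))
  constructor
  · -- part (a)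
    intro s hs hsC
    set m := s.card with hm
    have hcard : s.card = m := hm.symm
    have hmn : m ≤ n := by
      have := Finset.card_le_card hs
      simpa [Nat.card_Icc] using this
    set f := s.orderEmbOfFin hcard with hf
    have hfmem : ∀ i : Fin m, f i ∈ s := fun i => s.orderEmbOfFin_mem hcard i
    have hfs : ∀ i : Fin m, 1 ≤ f i ∧ f i ≤ n := fun i => Finset.mem_Icc.mp (hs (hfmem i))
    have hlow : ∀ i : Fin m, (i : ℕ) + 1 ≤ f i := by
      intro i
      obtain ⟨v, hv⟩ := i
      induction v with
      | zero => simpa using (hfs ⟨0, hv⟩).1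
      | succ t iht =>
        have ht : t < m := by omega
        have h1 := iht ht
        have h2 : f ⟨t, ht⟩ < f ⟨t + 1, hv⟩ :=
          (s.orderEmbOfFin hcard).strictMono (by simp [Fin.lt_def])
        simp only [Fin.val_mk] at h1 ⊢
        omega
    have himg : Finset.image (fun i : Fin m => f i) Finset.univ = s := by
      ext x
      simp only [Finset.mem_image, Finset.mem_univ, true_and]
      constructor
      · rintro ⟨i, rfl⟩; exact hfmem i
      · intro hx
        have hx' : x ∈ Set.range f := by
          rw [hf, Finset.range_orderEmbOfFin]; exact hx
        obtain ⟨i, hi⟩ := hx'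
        exact ⟨i, hi⟩
    have hinj : ∀ a ∈ (Finset.univ : Finset (Fin m)), ∀ b ∈ Finset.univ,
        f a = f b → a = b := fun a _ b _ h => f.injective h
    have hsumW : pwtW w s = ∑ i : Fin m, w (f i) := by
      unfold pwtW; rw [← himg, Finset.sum_image hinj]
    have hsumP : pwtP p s = ∑ i : Fin m, p (f i) := by
      unfold pwtP; rw [← himg, Finset.sum_image hinj]
    have hIcc : ∀ g : ℕ → ℝ, ∑ j ∈ Finset.Icc 1 m, g j = ∑ i : Fin m, g ((i : ℕ) + 1) := by
      intro g
      rw [← Finset.Ico_add_one_right_eq_Icc, Finset.sum_Ico_eq_sum_range]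
      rw [show m + 1 - 1 = m from rfl, Fin.sum_univ_eq_sum_range (fun i => g (i + 1))]
      exact Finset.sum_congr rfl (fun i _ => by rw [Nat.add_comm])
    have hWm : pwtW w (Finset.Icc 1 m) ≤ pwtW w s := by
      rw [hsumW]
      unfold pwtW
      rw [hIcc w]
      refine Finset.sum_le_sum (fun i _ => ?_)
      rcases eq_or_lt_of_le (hlow i) with h | h
      · exact le_of_eq (congrArg w h)
      · exact (hwm ((i : ℕ) + 1) (f i) (by omega) h (hfs i).2).le
    have hPm : pwtP p s ≤ pwtP p (Finset.Icc 1 m) := by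
      rw [hsumP]
      unfold pwtP
      rw [hIcc p]
      refine Finset.sum_le_sum (fun i _ => ?_)
      rcases eq_or_lt_of_le (hlow i) with h | h
      · exact le_of_eq (congrArg p h.symm)
      · exact (hpm ((i : ℕ) + 1) (f i) (by omega) h (hfs i).2).le
    have hposS : 0 < vmax - ν * pwtW w s := by
      have h1 := mul_le_mul_of_nonneg_left hsC hν0.le
      linarith
    have hposm : 0 < vmax - ν * pwtW w (Finset.Icc 1 m) := hApos m hmn
    have hBm : pwtB w p R d vmax ν s ≤ pwtB w p R d vmax ν (Finset.Icc 1 m) := by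
      unfold pwtB
      have h2 : vmax - ν * pwtW w s ≤ vmax - ν * pwtW w (Finset.Icc 1 m) := by
        have := mul_le_mul_of_nonneg_left hWm hν0.le; linarith
      have hcost : R * d / (vmax - ν * pwtW w (Finset.Icc 1 m))
          ≤ R * d / (vmax - ν * pwtW w s) :=
        div_le_div_of_nonneg_left (by positivity) hposS h2
      linarith
    rcases le_or_gt m k with hmk | hkm
    · exact ⟨m, hmk, hWm, hBm⟩
    · rcases lt_or_eq_of_le hko with hko' | hkeq
      · exfalso
        have h1 := hkmax (k + 1) (Nat.lt_succ_self k) hko'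
        have h2 := Wmono_le (k + 1) m hkm hmn
        linarith
      · refine ⟨k, le_refl k, ?_, ?_⟩
        · exact le_trans (Wmono_le k m hkm.le hmn) hWm
        · have hd2 := Bdesc m (by omega) hmn
          rw [← hkeq] at hd2
          linarith
  · -- part (b)
    intro i j hij hjk
    exact ⟨Wmono_lt j (by omega) i hij, Bmono j hjk i hij⟩
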